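/- Let n be a positive integer, let p_1 < p_2 < ... < p_n be distinct positive real numbers, and let r be a positive real number. Then the Kwong matrix K_r(p_1,...,p_n) is singular if and only if r is an odd integer with r < n. -/

import Mathlib

open Matrix

/-- The Kwong matrix: (i,j) entry is `(p i ^ r + p j ^ r) / (p i + p j)`. -/
noncomputable def kwong {n : ℕ} (p : Fin n → ℝ) (r : ℝ) : Matrix (Fin n) (Fin n) ℝ :=
  Matrix.of fun i j => (p i ^ r + p j ^ r) / (p i + p j)

lemma kwong_isHermitian {n : ℕ} (p : Fin n → ℝ) (r : ℝ) : (kwong p r).IsHermitian := by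
  ext i j
  simp only [kwong, Matrix.conjTranspose_apply, Matrix.of_apply, star_trivial]
  rw [add_comm (p j ^ r), add_comm (p j)]

/-- The inertia of a real symmetric matrix: the numbers of positive, zero and
negative eigenvalues, counted with multiplicity. -/
noncomputable def inertia {n : ℕ} (A : Matrix (Fin n) (Fin n) ℝ) (hA : A.IsHermitian) :
    ℕ × ℕ × ℕ :=
  ({i | 0 < hA.eigenvalues i}.ncard, {i | hA.eigenvalues i = 0}.ncard,
    {i | hA.eigenvalues i < 0}.ncard)


open Finset in

/-- An exponential sum with `m` terms (distinct real exponents) vanishing at `m`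
distinct positive points has all coefficients zero. -/
lemma expsum_eq_zero : ∀ (m : ℕ) (μ : Fin m → ℝ), Function.Injective μ →
    ∀ (x : Fin m → ℝ), StrictMono x → (∀ i, 0 < x i) → ∀ (c : Fin m → ℝ),
    (∀ i, ∑ t, c t * x i ^ μ t = 0) → ∀ t, c t = 0 := by
  intro m
  induction m with
  | zero => intro _ _ _ _ _ _ _ t; exact t.elim0
  | succ m ih =>
    intro μ hμ x hx hxpos c hz
    -- normalized function and its derivative
    set g : ℝ → ℝ := fun y => ∑ t, c t * y ^ (μ t - μ 0) with hg
    set g' : ℝ → ℝ := fun y => ∑ t, c t * ((μ t - μ 0) * y ^ (μ t - μ 0 - 1)) with hg'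
    have hder : ∀ y : ℝ, 0 < y → HasDerivAt g (g' y) y := by
      intro y hy
      apply HasDerivAt.fun_sum
      intro t _
      exact (Real.hasDerivAt_rpow_const (Or.inl hy.ne')).const_mul (c t)
    have hgz : ∀ i, g (x i) = 0 := by
      intro i
      have h0 : x i ^ μ 0 ≠ 0 := (Real.rpow_pos_of_pos (hxpos i) _).ne'
      have : g (x i) = (∑ t, c t * x i ^ μ t) / x i ^ μ 0 := by
        rw [Finset.sum_div]
        refine Finset.sum_congr rfl fun t _ => ?_
        rw [Real.rpow_sub (hxpos i), mul_div_assoc]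
      rw [this, hz i, zero_div]
    -- Rolle between consecutive zeros
    have key : ∀ i : Fin m, ∃ y ∈ Set.Ioo (x i.castSucc) (x i.succ), g' y = 0 := by
      intro i
      have hlt : x i.castSucc < x i.succ := hx (Fin.castSucc_lt_succ : i.castSucc < i.succ)
      refine exists_hasDerivAt_eq_zero hlt ?_ ((hgz _).trans (hgz _).symm) ?_
      · intro y hy
        have hy0 : 0 < y := lt_of_lt_of_le (hxpos _) hy.1
        exact (hder y hy0).continuousAt.continuousWithinAt
      · intro y hy
        exact hder y (lt_trans (hxpos _) hy.1)
    choose y hy hgy using key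
    have hypos : ∀ i, 0 < y i := fun i => lt_trans (hxpos _) (hy i).1
    have hymono : StrictMono y := by
      intro i j hij
      calc y i < x i.succ := (hy i).2
        _ ≤ x j.castSucc := by
            rcases eq_or_lt_of_le (Fin.succ_le_castSucc_iff.mpr hij) with h | h
            · exact le_of_eq (congrArg x h)
            · exact (hx h).le
        _ < y j := (hy j).1
    have hsum : ∀ i, ∑ t : Fin m, (c t.succ * (μ t.succ - μ 0)) * y i ^ (μ t.succ - μ 0 - 1) = 0 := by
      intro i
      have this : ∑ t : Fin (m+1), c t * ((μ t - μ 0) * y i ^ (μ t - μ 0 - 1)) = 0 := hgy i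
      rw [Fin.sum_univ_succ] at this
      simp only [sub_self, zero_mul, mul_zero, zero_add] at this
      rw [← this]
      exact Finset.sum_congr rfl fun t _ => by ring
    have hinj : Function.Injective (fun t : Fin m => μ t.succ - μ 0 - 1) := by
      intro a b hab
      simp only [sub_left_inj] at hab
      exact Fin.succ_injective _ (hμ hab)
    have hd := ih _ hinj y hymono hypos _ hsum
    have hcs : ∀ t : Fin m, c t.succ = 0 := by
      intro t
      have := hd t
      rcases mul_eq_zero.mp this with h | h
      · exact h
      · exact absurd (sub_eq_zero.mp h) (fun he => (Fin.succ_ne_zero t) (hμ he))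
    have hc0 : c 0 = 0 := by
      have := hz 0
      rw [Fin.sum_univ_succ] at this
      simp only [hcs, zero_mul, Finset.sum_const_zero, add_zero] at this
      exact (mul_eq_zero.mp this).resolve_right (Real.rpow_pos_of_pos (hxpos 0) _).ne'
    intro t
    exact Fin.cases hc0 hcs t

open Finset in

lemma kwong_det_zero {n k : ℕ} (p : Fin n → ℝ) (hpos : ∀ i, 0 < p i)
    (hk : Odd k) (hkn : k < n) : (kwong p ((k : ℕ) : ℝ)).det = 0 := by
  set M : Matrix (Fin n) (Fin n) ℝ :=
    Matrix.of fun i t => if (t : ℕ) < k then p i ^ (t : ℕ) else 0 with hM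
  set N : Matrix (Fin n) (Fin n) ℝ :=
    Matrix.of fun t j => if (t : ℕ) < k then (-(p j)) ^ (k - 1 - (t : ℕ)) else 0 with hN
  have hKMN : kwong p ((k : ℕ) : ℝ) = M * N := by
    ext i j
    have hij : p i + p j ≠ 0 := (add_pos (hpos i) (hpos j)).ne'
    have hgeo := geom_sum₂_mul (p i) (-(p j)) k
    rw [hk.neg_pow, sub_neg_eq_add, sub_neg_eq_add] at hgeo
    show (p i ^ ((k:ℕ):ℝ) + p j ^ ((k:ℕ):ℝ)) / (p i + p j) = ∑ t : Fin n, M i t * N t j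
    have hsum : ∑ t : Fin n, M i t * N t j
        = ∑ t ∈ range k, p i ^ t * (-(p j)) ^ (k - 1 - t) := by
      have h1 : ∑ t : Fin n, M i t * N t j
          = ∑ t ∈ range n, (if t < k then p i ^ t * (-(p j)) ^ (k - 1 - t) else 0) := by
        rw [← Fin.sum_univ_eq_sum_range]
        refine Finset.sum_congr rfl fun t _ => ?_
        by_cases h : (t : ℕ) < k <;> simp [hM, hN, h]
      rw [h1, ← Finset.sum_subset (Finset.range_subset_range.mpr hkn.le)
        (fun t _ ht => if_neg (by simpa using ht))]
      exact Finset.sum_congr rfl fun t ht => if_pos (mem_range.mp ht)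
    rw [hsum, Real.rpow_natCast, Real.rpow_natCast, div_eq_iff hij, ← hgeo]
  rw [hKMN, Matrix.det_mul, Matrix.det_eq_zero_of_column_eq_zero ⟨k, hkn⟩
    (fun i => by simp [hM]), zero_mul]

open Finset Polynomial in

lemma kwong_det_ne_zero {n : ℕ} (p : Fin n → ℝ) (hpos : ∀ i, 0 < p i)
    (hmono : StrictMono p) (r : ℝ) (hr : 0 < r)
    (hko : ¬ ∃ k : ℕ, Odd k ∧ r = (k : ℝ) ∧ k < n) : (kwong p r).det ≠ 0 := by
  classical
  intro hdet
  obtain ⟨c, hc0, hKc⟩ := Matrix.exists_mulVec_eq_zero_iff.mpr hdet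
  obtain ⟨j₀, hj₀⟩ := Function.ne_iff.mp hc0
  have hn : 0 < n := j₀.pos
  -- the polynomials a and b
  set q : Fin n → ℝ[X] := fun j => ∏ k ∈ Finset.univ.erase j, (X + C (p k)) with hq
  set a : ℝ[X] := ∑ j, C (c j) * q j with ha
  set b : ℝ[X] := ∑ j, C (c j * p j ^ r) * q j with hb
  have hqdeg : ∀ j, (q j).natDegree ≤ n - 1 := by
    intro j
    refine le_trans (Polynomial.natDegree_prod_le _ _) ?_
    have hdeg1 : ∀ k ∈ Finset.univ.erase j, (X + C (p k)).natDegree = 1 :=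
      fun k _ => Polynomial.natDegree_X_add_C _
    rw [Finset.sum_congr rfl hdeg1, Finset.sum_const, smul_eq_mul, mul_one,
      Finset.card_erase_of_mem (Finset.mem_univ j), Finset.card_univ, Fintype.card_fin]
  have hadeg : a.natDegree < n := by
    refine lt_of_le_of_lt (Polynomial.natDegree_sum_le_of_forall_le _ _
      (fun j _ => le_trans (Polynomial.natDegree_C_mul_le _ _) (hqdeg j))) ?_
    omega
  have hbdeg : b.natDegree < n := by
    refine lt_of_le_of_lt (Polynomial.natDegree_sum_le_of_forall_le _ _
      (fun j _ => le_trans (Polynomial.natDegree_C_mul_le _ _) (hqdeg j))) ?_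
    omega
  -- evaluations of q
  have hqeval : ∀ (j : Fin n) (x : ℝ), (q j).eval x = ∏ k ∈ Finset.univ.erase j, (x + p k) := by
    intro j x; simp [hq, Polynomial.eval_prod]
  -- evaluation of a and b at -(p j)
  have hqneg : ∀ j l : Fin n, j ≠ l → (q l).eval (-(p j)) = 0 := by
    intro j l hjl
    rw [hqeval]
    exact Finset.prod_eq_zero (Finset.mem_erase.mpr ⟨hjl, Finset.mem_univ j⟩) (by ring)
  have hQa : ∀ j, a.eval (-(p j)) = c j * ∏ k ∈ Finset.univ.erase j, (p k - p j) := by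
    intro j
    rw [ha, Polynomial.eval_finset_sum]
    rw [Finset.sum_eq_single j (fun l _ hlj => by
      rw [Polynomial.eval_mul, hqneg j l (Ne.symm hlj), mul_zero]) (by simp)]
    rw [Polynomial.eval_mul, Polynomial.eval_C, hqeval,
      Finset.prod_congr rfl (fun k _ => by ring :
        ∀ k ∈ Finset.univ.erase j, -p j + p k = p k - p j)]
  have hQb : ∀ j, b.eval (-(p j)) = c j * p j ^ r * ∏ k ∈ Finset.univ.erase j, (p k - p j) := by
    intro j
    rw [hb, Polynomial.eval_finset_sum]
    rw [Finset.sum_eq_single j (fun l _ hlj => by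
      rw [Polynomial.eval_mul, hqneg j l (Ne.symm hlj), mul_zero]) (by simp)]
    rw [Polynomial.eval_mul, Polynomial.eval_C, hqeval,
      Finset.prod_congr rfl (fun k _ => by ring :
        ∀ k ∈ Finset.univ.erase j, -p j + p k = p k - p j), mul_assoc]
  -- the key equation at p i
  have hP : ∀ i, p i ^ r * a.eval (p i) + b.eval (p i) = 0 := by
    intro i
    have h1 : ∑ j, kwong p r i j * c j = 0 := congrFun hKc i
    have h2 : (∑ j, kwong p r i j * c j) * ∏ k, (p i + p k) = 0 := by rw [h1, zero_mul]
    rw [Finset.sum_mul] at h2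
    have h3 : ∀ j, kwong p r i j * c j * ∏ k, (p i + p k)
        = c j * ((p i ^ r + p j ^ r) * ∏ k ∈ Finset.univ.erase j, (p i + p k)) := by
      intro j
      have hd : p i + p j ≠ 0 := (add_pos (hpos i) (hpos j)).ne'
      rw [← Finset.mul_prod_erase Finset.univ _ (Finset.mem_univ j)]
      show (p i ^ r + p j ^ r) / (p i + p j) * c j *
        ((p i + p j) * ∏ k ∈ Finset.univ.erase j, (p i + p k)) = _
      field_simp
    rw [Finset.sum_congr rfl (fun j _ => h3 j)] at h2
    have h4 : ∀ j, c j * ((p i ^ r + p j ^ r) * ∏ k ∈ Finset.univ.erase j, (p i + p k))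
        = p i ^ r * ((C (c j) * q j).eval (p i)) + (C (c j * p j ^ r) * q j).eval (p i) := by
      intro j
      rw [Polynomial.eval_mul, Polynomial.eval_mul, Polynomial.eval_C, Polynomial.eval_C, hqeval]
      ring
    rw [Finset.sum_congr rfl (fun j _ => h4 j), Finset.sum_add_distrib, ← Finset.mul_sum] at h2
    rw [ha, hb, Polynomial.eval_finset_sum, Polynomial.eval_finset_sum]
    exact h2
  -- coefficient versions
  have hPc : ∀ i, ∑ k ∈ range n,
      (a.coeff k * (p i ^ r * p i ^ k) + b.coeff k * p i ^ k) = 0 := by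
    intro i
    have := hP i
    rw [Polynomial.eval_eq_sum_range' hadeg, Polynomial.eval_eq_sum_range' hbdeg,
      Finset.mul_sum, ← Finset.sum_add_distrib] at this
    rw [← this]
    exact Finset.sum_congr rfl fun k _ => by ring
  have hQ : ∀ i, p i ^ r * a.eval (-(p i)) - b.eval (-(p i)) = 0 := by
    intro i; rw [hQa, hQb]; ring
  have hQc : ∀ i, ∑ k ∈ range n,
      ((-1 : ℝ) ^ k * (a.coeff k * (p i ^ r * p i ^ k)) - (-1 : ℝ) ^ k * (b.coeff k * p i ^ k))
      = 0 := by
    intro i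
    have := hQ i
    rw [Polynomial.eval_eq_sum_range' hadeg, Polynomial.eval_eq_sum_range' hbdeg,
      Finset.mul_sum, ← Finset.sum_sub_distrib] at this
    rw [← this]
    refine Finset.sum_congr rfl fun k _ => ?_
    rw [neg_pow (p i) k]
    ring
  -- the two exponential sums
  have hrpow : ∀ (i : Fin n) (k : ℕ), p i ^ (r + (k : ℕ)) = p i ^ r * p i ^ k := by
    intro i k
    rw [Real.rpow_add (hpos i), Real.rpow_natCast]
  have hnat : ∀ (i : Fin n) (k : ℕ), p i ^ ((k : ℕ) : ℝ) = p i ^ k := fun i k =>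
    Real.rpow_natCast _ _
  -- injectivity helper
  have hcross : ∀ s t : ℕ, s < n → t < n → Odd s → ¬ Odd t → r + (s : ℝ) ≠ (t : ℝ) := by
    intro s t hsn htn hs ht h
    have hst : s < t := by
      have : (s : ℝ) < (t : ℝ) := by linarith [hr]
      exact_mod_cast this
    refine hko ⟨t - s, Nat.Even.sub_odd hst.le (Nat.not_odd_iff_even.mp ht) hs, ?_, by omega⟩
    push_cast [Nat.cast_sub hst.le]
    linarith
  have hcross' : ∀ s t : ℕ, s < n → t < n → ¬ Odd s → Odd t → r + (s : ℝ) ≠ (t : ℝ) := by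
    intro s t hsn htn hs ht h
    have hst : s < t := by
      have : (s : ℝ) < (t : ℝ) := by linarith [hr]
      exact_mod_cast this
    refine hko ⟨t - s, Nat.Odd.sub_even hst.le ht (Nat.not_odd_iff_even.mp hs), ?_, by omega⟩
    push_cast [Nat.cast_sub hst.le]
    linarith
  -- sum number 2: odd => a-coefficient with exponent r + k, even => b-coefficient, exponent k
  have hA2 : ∀ t : Fin n, (if Odd (t : ℕ) then a.coeff (t : ℕ) else b.coeff (t : ℕ)) = 0 := by
    refine expsum_eq_zero n
      (fun t => if Odd (t : ℕ) then r + ((t : ℕ) : ℝ) else ((t : ℕ) : ℝ)) ?_ p hmono hpos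
      (fun t => if Odd (t : ℕ) then a.coeff (t : ℕ) else b.coeff (t : ℕ)) ?_
    · intro s t h
      simp only at h
      by_cases hs : Odd (s : ℕ) <;> by_cases ht : Odd (t : ℕ) <;>
        simp only [hs, ht, if_pos, if_neg, if_true, if_false] at h
      · have : ((s : ℕ) : ℝ) = ((t : ℕ) : ℝ) := by linarith
        exact Fin.ext (by exact_mod_cast this)
      · exact absurd h (hcross s t s.isLt t.isLt hs ht)
      · exact absurd h.symm (hcross t s t.isLt s.isLt ht hs)
      · exact Fin.ext (by exact_mod_cast h)
    · intro i
      have key : ∀ k ∈ range n,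
          (if Odd k then a.coeff k else b.coeff k) *
            p i ^ (if Odd k then r + (k : ℝ) else ((k : ℕ) : ℝ))
          = ((a.coeff k * (p i ^ r * p i ^ k) + b.coeff k * p i ^ k)
            - ((-1 : ℝ) ^ k * (a.coeff k * (p i ^ r * p i ^ k))
              - (-1 : ℝ) ^ k * (b.coeff k * p i ^ k))) / 2 := by
        intro k _
        rcases Nat.even_or_odd k with he | ho
        · rw [if_neg (by simpa using he), if_neg (by simpa using he), he.neg_one_pow, hnat]
          ring
        · rw [if_pos ho, if_pos ho, ho.neg_one_pow, hrpow]
          ring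
      rw [Fin.sum_univ_eq_sum_range (fun k =>
        (if Odd k then a.coeff k else b.coeff k) *
          p i ^ (if Odd k then r + (k : ℝ) else ((k : ℕ) : ℝ))) n]
      rw [Finset.sum_congr rfl key, ← Finset.sum_div, Finset.sum_sub_distrib,
        hPc i, hQc i]
      norm_num
  -- sum number 1: even => a-coefficient with exponent r + k, odd => b-coefficient, exponent k
  have hA1 : ∀ t : Fin n, (if Odd (t : ℕ) then b.coeff (t : ℕ) else a.coeff (t : ℕ)) = 0 := by
    refine expsum_eq_zero n
      (fun t => if Odd (t : ℕ) then ((t : ℕ) : ℝ) else r + ((t : ℕ) : ℝ)) ?_ p hmono hpos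
      (fun t => if Odd (t : ℕ) then b.coeff (t : ℕ) else a.coeff (t : ℕ)) ?_
    · intro s t h
      simp only at h
      by_cases hs : Odd (s : ℕ) <;> by_cases ht : Odd (t : ℕ) <;>
        simp only [hs, ht, if_pos, if_neg, if_true, if_false] at h
      · exact Fin.ext (by exact_mod_cast h)
      · exact absurd h.symm (hcross' t s t.isLt s.isLt ht hs)
      · exact absurd h (hcross' s t s.isLt t.isLt hs ht)
      · have : ((s : ℕ) : ℝ) = ((t : ℕ) : ℝ) := by linarith
        exact Fin.ext (by exact_mod_cast this)
    · intro i
      have key : ∀ k ∈ range n,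
          (if Odd k then b.coeff k else a.coeff k) *
            p i ^ (if Odd k then ((k : ℕ) : ℝ) else r + (k : ℝ))
          = ((a.coeff k * (p i ^ r * p i ^ k) + b.coeff k * p i ^ k)
            + ((-1 : ℝ) ^ k * (a.coeff k * (p i ^ r * p i ^ k))
              - (-1 : ℝ) ^ k * (b.coeff k * p i ^ k))) / 2 := by
        intro k _
        rcases Nat.even_or_odd k with he | ho
        · rw [if_neg (by simpa using he), if_neg (by simpa using he), he.neg_one_pow, hrpow]
          ring
        · rw [if_pos ho, if_pos ho, ho.neg_one_pow, hnat]
          ring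
      rw [Fin.sum_univ_eq_sum_range (fun k =>
        (if Odd k then b.coeff k else a.coeff k) *
          p i ^ (if Odd k then ((k : ℕ) : ℝ) else r + (k : ℝ))) n]
      rw [Finset.sum_congr rfl key, ← Finset.sum_div, Finset.sum_add_distrib,
        hPc i, hQc i]
      norm_num
  -- all coefficients of a vanish
  have hacoeff : ∀ k, a.coeff k = 0 := by
    intro k
    by_cases hk : k < n
    · rcases Nat.even_or_odd k with he | ho
      · have := hA1 ⟨k, hk⟩
        rwa [if_neg (by simpa using he)] at this
      · have := hA2 ⟨k, hk⟩
        rwa [if_pos ho] at this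
    · exact Polynomial.coeff_eq_zero_of_natDegree_lt (lt_of_lt_of_le hadeg (le_of_not_gt hk))
  have haz : a = 0 := Polynomial.ext fun k => by rw [hacoeff k, Polynomial.coeff_zero]
  -- contradiction
  have := hQa j₀
  rw [haz, Polynomial.eval_zero] at this
  have hprod : ∏ k ∈ Finset.univ.erase j₀, (p k - p j₀) ≠ 0 := by
    refine Finset.prod_ne_zero_iff.mpr fun k hk => ?_
    exact sub_ne_zero.mpr fun h => (Finset.mem_erase.mp hk).1 (hmono.injective h)
  exact hj₀ (by
    rcases mul_eq_zero.mp this.symm with h | h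
    · exact h
    · exact absurd h hprod)


/-- For `0 < n`, distinct positive reals `p 0 < p 1 < ⋯` and `r > 0`,
the Kwong matrix `K_r` is singular iff `r` is an odd integer with `r < n`. -/
theorem kwong_singular_iff {n : ℕ} (hn : 0 < n) (p : Fin n → ℝ)
    (hpos : ∀ i, 0 < p i) (hmono : StrictMono p) (r : ℝ) (hr : 0 < r) :
    (kwong p r).det = 0 ↔ ∃ k : ℕ, Odd k ∧ r = (k : ℝ) ∧ k < n := by
  constructor
  · intro hdet
    by_contra hko
    exact kwong_det_ne_zero p hpos hmono r hr hko hdet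
  · rintro ⟨k, hk, rfl, hkn⟩
    exact kwong_det_zero p hpos hk hkn
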